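/- There is a universal constant C such that for every nonnegative C³ L-periodic function η with η > 0, and all x: |η'(x)|² ≤ C ‖η''‖_{L²(0,L)}^{1/2} ‖η'''‖_{L²(0,L)}^{1/2} · η(x). -/

import Mathlib

open MeasureTheory intervalIntegral

/-- Derivative of a periodic function is periodic. -/
lemma periodic_deriv_aux {f : ℝ → ℝ} {L : ℝ} (hf : Function.Periodic f L) :
    Function.Periodic (deriv f) L := by
  intro x
  have hfe : (fun y => f (y + L)) = f := funext hf
  rw [← deriv_comp_add_const f L x, hfe]

/-- epsilon-infimum lemma: if x ≤ ε⁻¹ A + ε B for all ε > 0, then x ≤ 2 √A √B. -/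
lemma aux_inf {A B x : ℝ} (hA : 0 ≤ A) (hB : 0 ≤ B)
    (h : ∀ ε : ℝ, 0 < ε → x ≤ ε⁻¹ * A + ε * B) : x ≤ 2 * Real.sqrt A * Real.sqrt B := by
  have hs : 0 ≤ 2 * Real.sqrt A * Real.sqrt B := by positivity
  rcases eq_or_lt_of_le hA with hA0 | hA0
  · -- A = 0
    refine le_trans ?_ hs
    by_contra hx
    push_neg at hx
    rcases eq_or_lt_of_le hB with hB0 | hB0
    · have := h 1 one_pos
      rw [← hA0, ← hB0] at this
      simp at this; linarith
    · have hε : 0 < x / (2 * B) := by positivity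
      have := h (x / (2 * B)) hε
      rw [← hA0, mul_zero, zero_add] at this
      have h2 : x / (2 * B) * B = x / 2 := by field_simp
      rw [h2] at this
      linarith
  · rcases eq_or_lt_of_le hB with hB0 | hB0
    · -- B = 0
      refine le_trans ?_ hs
      by_contra hx
      push_neg at hx
      have hε : 0 < 2 * A / x := by positivity
      have := h (2 * A / x) hε
      rw [← hB0, mul_zero, add_zero, inv_div] at this
      have hxA : x / (2 * A) * A = x / 2 := by field_simp
      rw [hxA] at this
      linarith
    · have hε : 0 < Real.sqrt A / Real.sqrt B := by positivity
      have := h _ hε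
      rw [inv_div] at this
      have hcalc : Real.sqrt B / Real.sqrt A * A + Real.sqrt A / Real.sqrt B * B
          = 2 * Real.sqrt A * Real.sqrt B := by
        rw [div_mul_eq_mul_div, div_mul_eq_mul_div, mul_div_assoc, mul_div_assoc,
          Real.div_sqrt, Real.div_sqrt]
        ring
      linarith [this, hcalc.le]

theorem stmt4 :
    ∃ C : ℝ, 0 < C ∧ ∀ L : ℝ, 0 < L → ∀ η : ℝ → ℝ, ContDiff ℝ 3 η →
      Function.Periodic η L → (∀ x, 0 < η x) → ∀ x,
      (deriv η x) ^ 2 ≤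
        C * (∫ s in (0:ℝ)..L, (iteratedDeriv 2 η s) ^ 2) ^ ((1:ℝ)/4)
          * (∫ s in (0:ℝ)..L, (iteratedDeriv 3 η s) ^ 2) ^ ((1:ℝ)/4) * η x := by
  refine ⟨8, by norm_num, ?_⟩
  intro L hL η hη hper hpos x
  rw [show (3 : WithTop ℕ∞) = 2 + 1 from rfl, contDiff_succ_iff_deriv] at hη
  obtain ⟨hdiff0, -, hη2⟩ := hη
  set f1 := deriv η with hf1
  rw [show (2 : WithTop ℕ∞) = 1 + 1 from rfl, contDiff_succ_iff_deriv] at hη2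
  obtain ⟨hdiff1, -, hη1⟩ := hη2
  set f2 := deriv f1 with hf2
  rw [contDiff_one_iff_deriv] at hη1
  obtain ⟨hdiff2, hcont3⟩ := hη1
  set f3 := deriv f2 with hf3
  have hcont2 : Continuous f2 := hdiff2.continuous
  have hcont1 : Continuous f1 := hdiff1.continuous
  have hper1 : Function.Periodic f1 L := periodic_deriv_aux hper
  have hper2 : Function.Periodic f2 L := periodic_deriv_aux hper1
  have hper3 : Function.Periodic f3 L := periodic_deriv_aux hper2
  have hit2 : iteratedDeriv 2 η = f2 := by
    rw [show (2:ℕ) = 1+1 from rfl, iteratedDeriv_succ, iteratedDeriv_one]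
  have hit3 : iteratedDeriv 3 η = f3 := by
    rw [show (3:ℕ) = 2+1 from rfl, iteratedDeriv_succ, hit2]
  rw [hit2, hit3]
  set A := ∫ s in (0:ℝ)..L, f2 s ^ 2 with hA_def
  set B := ∫ s in (0:ℝ)..L, f3 s ^ 2 with hB_def
  have hA : 0 ≤ A := intervalIntegral.integral_nonneg hL.le (fun u _ => sq_nonneg _)
  have hB : 0 ≤ B := intervalIntegral.integral_nonneg hL.le (fun u _ => sq_nonneg _)
  -- interpolation: sup bound on f2
  have key : ∀ y, f2 y ^ 2 ≤ 2 * Real.sqrt A * Real.sqrt B := by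
    have hGL : (∫ s in (0:ℝ)..L, f2 s) = 0 := by
      rw [intervalIntegral.integral_deriv_eq_sub (fun u _ => hdiff1 u)
        (hcont2.intervalIntegrable _ _)]
      have h0 := hper1 0
      rw [zero_add] at h0
      rw [h0, sub_self]
    obtain ⟨c, hc, hc0⟩ := exists_hasDerivAt_eq_zero (f' := f2) hL
      (Continuous.continuousOn (continuous_iff_continuousAt.mpr
        (fun u => ((hcont2.integral_hasStrictDerivAt 0 u).hasDerivAt.continuousAt))))
      (by rw [intervalIntegral.integral_same, hGL])
      (fun u _ => (hcont2.integral_hasStrictDerivAt 0 u).hasDerivAt)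
    intro y
    obtain ⟨m, hm, -⟩ := existsUnique_add_zsmul_mem_Ico hL y c
    set z := y + m • L with hz
    have hyz : f2 z = f2 y := (hper2.zsmul m) y
    have hcz : c ≤ z := hm.1
    have hzL : z ≤ c + L := hm.2.le
    have hsq : f2 z ^ 2 - f2 c ^ 2 = ∫ s in c..z, 2 * f2 s * f3 s := by
      rw [← intervalIntegral.integral_eq_sub_of_hasDerivAt
        (f := fun s => f2 s ^ 2) (f' := fun s => 2 * f2 s * f3 s)
        (fun s _ => by
          have h := (hdiff2 s).hasDerivAt.pow 2
          norm_num at h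
          exact h)
        (((continuous_const.mul hcont2).mul hcont3).intervalIntegrable _ _)]
    have habs : f2 z ^ 2 ≤ ∫ s in c..c+L, |2 * f2 s * f3 s| :=
      calc f2 z ^ 2 = ∫ s in c..z, 2 * f2 s * f3 s := by rw [← hsq, hc0]; ring
        _ ≤ |∫ s in c..z, 2 * f2 s * f3 s| := le_abs_self _
        _ ≤ ∫ s in c..z, |2 * f2 s * f3 s| :=
            intervalIntegral.abs_integral_le_integral_abs hcz
        _ ≤ ∫ s in c..c+L, |2 * f2 s * f3 s| :=
            intervalIntegral.integral_mono_interval le_rfl hcz hzL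
              (ae_of_all _ fun s => abs_nonneg _)
              ((((continuous_const.mul hcont2).mul hcont3).abs).intervalIntegrable _ _)
    have hεb : ∀ ε : ℝ, 0 < ε → f2 z ^ 2 ≤ ε⁻¹ * A + ε * B := by
      intro ε hε
      have hpoint : ∀ s : ℝ, |2 * f2 s * f3 s| ≤ ε⁻¹ * f2 s ^ 2 + ε * f3 s ^ 2 := by
        intro s
        have hne : ε ≠ 0 := hε.ne'
        rw [abs_mul, abs_mul, abs_two, ← sq_abs (f2 s), ← sq_abs (f3 s)]
        obtain ⟨a, ha⟩ : ∃ a, |f2 s| = a := ⟨_, rfl⟩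
        obtain ⟨b, hb⟩ : ∃ b, |f3 s| = b := ⟨_, rfl⟩
        rw [ha, hb]
        have h := div_nonneg (sq_nonneg (a - ε * b)) hε.le
        have hid : (a - ε * b) ^ 2 / ε = ε⁻¹ * a ^ 2 - 2 * (a * b) + ε * b ^ 2 := by
          field_simp
          ring
        rw [hid] at h
        linarith
      have hpA : Function.Periodic (fun s => f2 s ^ 2) L := fun s => by simp [hper2 s]
      have hpB : Function.Periodic (fun s => f3 s ^ 2) L := fun s => by simp [hper3 s]
      have hintA : (∫ s in c..c+L, f2 s ^ 2) = A := by
        rw [hA_def]; simpa using hpA.intervalIntegral_add_eq c 0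
      have hintB : (∫ s in c..c+L, f3 s ^ 2) = B := by
        rw [hB_def]; simpa using hpB.intervalIntegral_add_eq c 0
      calc f2 z ^ 2 ≤ ∫ s in c..c+L, |2 * f2 s * f3 s| := habs
        _ ≤ ∫ s in c..c+L, (ε⁻¹ * f2 s ^ 2 + ε * f3 s ^ 2) :=
            intervalIntegral.integral_mono_on (by linarith)
              ((((continuous_const.mul hcont2).mul hcont3).abs).intervalIntegrable _ _)
              (((continuous_const.mul (hcont2.pow 2)).add
                (continuous_const.mul (hcont3.pow 2))).intervalIntegrable _ _)
              (fun s _ => hpoint s)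
        _ = ε⁻¹ * A + ε * B := by
            rw [intervalIntegral.integral_add (f := fun s => ε⁻¹ * f2 s ^ 2) (g := fun s => ε * f3 s ^ 2)
              ((continuous_const.mul (hcont2.pow 2)).intervalIntegrable _ _)
              ((continuous_const.mul (hcont3.pow 2)).intervalIntegrable _ _),
              intervalIntegral.integral_const_mul, intervalIntegral.integral_const_mul,
              hintA, hintB]
    rw [← hyz]
    exact aux_inf hA hB hεb
  set K := 2 * Real.sqrt A * Real.sqrt B with hKdef
  have hK : 0 ≤ K := by positivity
  have hbound : ∀ y, |f2 y| ≤ Real.sqrt K := by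
    intro y
    rw [← Real.sqrt_sq_eq_abs]
    exact Real.sqrt_le_sqrt (key y)
  have lip : ∀ y z : ℝ, |f1 y - f1 z| ≤ Real.sqrt K * |y - z| := by
    intro y z
    have h := Convex.norm_image_sub_le_of_norm_deriv_le (f := f1) (s := Set.univ)
      (fun u _ => hdiff1 u) (fun u _ => by simpa [Real.norm_eq_abs, ← hf2] using hbound u)
      convex_univ (Set.mem_univ z) (Set.mem_univ y)
    simpa [Real.norm_eq_abs] using h
  have taylor : ∀ t : ℝ, |η (x + t) - η x - t * f1 x| ≤ Real.sqrt K * t ^ 2 := by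
    intro t
    set φ : ℝ → ℝ := fun s => η (x + s) - η x - s * f1 x with hφ
    have hφd : ∀ s : ℝ, HasDerivAt φ (f1 (x + s) - f1 x) s := by
      intro s
      have h1 : HasDerivAt (fun s : ℝ => η (x + s)) (f1 (x + s)) s := by
        have := ((hdiff0 (x + s)).hasDerivAt).comp s ((hasDerivAt_id s).const_add x)
        simpa [Function.comp_def] using this
      have h2 : HasDerivAt (fun s : ℝ => s * f1 x) (f1 x) s := by
        simpa using (hasDerivAt_id s).mul_const (f1 x)
      exact (h1.sub_const (η x)).sub h2
    have hmem0 : (0:ℝ) ∈ Set.Icc (-|t|) |t| := ⟨neg_nonpos.mpr (abs_nonneg t), abs_nonneg t⟩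
    have hmemt : t ∈ Set.Icc (-|t|) |t| := ⟨neg_abs_le t, le_abs_self t⟩
    have h := (convex_Icc (-|t|) |t|).norm_image_sub_le_of_norm_hasDerivWithin_le
      (f := φ) (f' := fun u => f1 (x + u) - f1 x) (C := Real.sqrt K * |t|)
      (fun u _ => (hφd u).hasDerivWithinAt)
      (fun u hu => by
        have h1 := lip (x + u) x
        rw [add_sub_cancel_left] at h1
        have h2 : |u| ≤ |t| := abs_le.mpr ⟨hu.1, hu.2⟩
        have h3 : Real.sqrt K * |u| ≤ Real.sqrt K * |t| :=
          mul_le_mul_of_nonneg_left h2 (Real.sqrt_nonneg K)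
        calc ‖f1 (x + u) - f1 x‖ = |f1 (x + u) - f1 x| := Real.norm_eq_abs _
          _ ≤ Real.sqrt K * |u| := h1
          _ ≤ Real.sqrt K * |t| := h3)
      hmem0 hmemt
    have hφ0 : φ 0 = 0 := by simp [hφ]
    rw [hφ0, sub_zero, sub_zero, Real.norm_eq_abs, Real.norm_eq_abs] at h
    calc |φ t| ≤ Real.sqrt K * |t| * |t| := h
      _ = Real.sqrt K * t ^ 2 := by rw [mul_assoc, abs_mul_abs_self, sq]
  have quad : ∀ t : ℝ, 0 ≤ Real.sqrt K * (t * t) + f1 x * t + η x := by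
    intro t
    have h1 := (abs_le.mp (taylor t)).1
    have h2 := (hpos (x + t)).le
    rw [show Real.sqrt K * (t * t) = Real.sqrt K * t ^ 2 from by ring]
    linarith [(abs_le.mp (taylor t)).2, h2]
  have hdisc := discrim_le_zero quad
  rw [discrim] at hdisc
  -- hdisc : f1 x ^ 2 - 4 * √K * η x ≤ 0
  have h4A : A ^ ((1:ℝ)/4) = Real.sqrt (Real.sqrt A) := by
    rw [show (1:ℝ)/4 = (1/2) * (1/2) by norm_num, Real.rpow_mul hA,
      ← Real.sqrt_eq_rpow, ← Real.sqrt_eq_rpow]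
  have h4B : B ^ ((1:ℝ)/4) = Real.sqrt (Real.sqrt B) := by
    rw [show (1:ℝ)/4 = (1/2) * (1/2) by norm_num, Real.rpow_mul hB,
      ← Real.sqrt_eq_rpow, ← Real.sqrt_eq_rpow]
  have hsqrtK : Real.sqrt K = Real.sqrt 2 * A ^ ((1:ℝ)/4) * B ^ ((1:ℝ)/4) := by
    rw [hKdef, h4A, h4B,
      Real.sqrt_mul (by positivity : (0:ℝ) ≤ 2 * Real.sqrt A),
      Real.sqrt_mul (by norm_num : (0:ℝ) ≤ 2)]
  have hs2 : Real.sqrt 2 ≤ 2 := by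
    nlinarith [Real.sq_sqrt (by norm_num : (0:ℝ) ≤ 2), Real.sqrt_nonneg 2]
  have hfinal : 4 * Real.sqrt K ≤ 8 * A ^ ((1:ℝ)/4) * B ^ ((1:ℝ)/4) := by
    rw [hsqrtK]
    have ha4 : 0 ≤ A ^ ((1:ℝ)/4) := Real.rpow_nonneg hA _
    have hb4 : 0 ≤ B ^ ((1:ℝ)/4) := Real.rpow_nonneg hB _
    have hab : (0:ℝ) ≤ (2 - Real.sqrt 2) * (A ^ ((1:ℝ)/4) * B ^ ((1:ℝ)/4)) :=
      mul_nonneg (by linarith) (mul_nonneg ha4 hb4)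
    nlinarith [hab]
  have hprod : 4 * Real.sqrt K * η x ≤ 8 * A ^ ((1:ℝ)/4) * B ^ ((1:ℝ)/4) * η x :=
    mul_le_mul_of_nonneg_right hfinal (hpos x).le
  linarith [hdisc, hprod]
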